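/- (Smith's lemma for operator sequence spaces) Let E and F be operator sequence spaces with dim F = m < ∞. Then every bounded linear map T : E → F is sequentially bounded, and ‖T‖_sb = ‖T^(m)‖, where T^(m) : Eᵐ → Fᵐ is the m-th amplification and ‖T‖_sb = sup_n ‖T^(n)‖. -/

import Mathlib

open Matrix MeasureTheory

noncomputable section

/-- Action of a scalar `m × n` matrix on a column of vectors in `E`. -/
def matVec {E : Type*} [AddCommMonoid E] [Module ℂ E] {m n : ℕ}
    (α : Matrix (Fin m) (Fin n) ℂ) (x : Fin n → E) : Fin m → E :=
  fun i => ∑ j, α i j • x j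

/-- Operator norm of a scalar matrix viewed as a map `ℓ²ₙ → ℓ²ₘ`. -/
noncomputable def matOpNorm {m n : ℕ} (α : Matrix (Fin m) (Fin n) ℂ) : ℝ :=
  ‖LinearMap.toContinuousLinearMap (Matrix.toEuclideanLin α)‖

/-- A sequential norm over a normed space `E`: a norm on each `Eⁿ`, agreeing with the
norm of `E` at level one, and satisfying the three axioms of an operator sequence space. -/
structure SeqNorm (E : Type*) [NormedAddCommGroup E] [NormedSpace ℂ E] where
  N : ∀ n : ℕ, (Fin n → E) → ℝ
  norm_one : ∀ x : Fin 1 → E, N 1 x = ‖x 0‖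
  add_le : ∀ (n : ℕ) (x y : Fin n → E), N n (x + y) ≤ N n x + N n y
  smul_eq : ∀ (n : ℕ) (c : ℂ) (x : Fin n → E), N n (c • x) = ‖c‖ * N n x
  eq_zero : ∀ (n : ℕ) (x : Fin n → E), N n x = 0 → x = 0
  append_zero : ∀ (m n : ℕ) (x : Fin m → E),
    N (m + n) (Fin.append x (0 : Fin n → E)) = N m x
  append_sq : ∀ (m n : ℕ) (x : Fin m → E) (y : Fin n → E),
    N (m + n) (Fin.append x y) ^ 2 ≤ N m x ^ 2 + N n y ^ 2
  matrix_le : ∀ (m n : ℕ) (α : Matrix (Fin m) (Fin n) ℂ) (x : Fin n → E),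
    N m (matVec α x) ≤ matOpNorm α * N n x

/-- `c` bounds the `n`-th amplification of `T` with respect to sequential norms on `E` and `F`. -/
def AmpBound {E F : Type*} [NormedAddCommGroup E] [NormedSpace ℂ E]
    [NormedAddCommGroup F] [NormedSpace ℂ F]
    (SE : SeqNorm E) (SF : SeqNorm F) (T : E →L[ℂ] F) (n : ℕ) (c : ℝ) : Prop :=
  ∀ x : Fin n → E, SF.N n (fun j => T (x j)) ≤ c * SE.N n x

/-! ### Auxiliary lemmas on matrix operator norms -/

open scoped Matrix.Norms.L2Operator in
lemma smith_matOpNorm_eq {m n : ℕ} (α : Matrix (Fin m) (Fin n) ℂ) : matOpNorm α = ‖α‖ := rfl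

open scoped Matrix.Norms.L2Operator in
lemma smith_matOpNorm_isometry {m n : ℕ} (α : Matrix (Fin m) (Fin n) ℂ)
    (h : αᴴ * α = 1) : matOpNorm α ≤ 1 := by
  have h1 : ‖αᴴ * α‖ = ‖α‖ * ‖α‖ := Matrix.l2_opNorm_conjTranspose_mul_self α
  rw [h] at h1
  have h2 : ‖(1 : Matrix (Fin n) (Fin n) ℂ)‖ ≤ 1 := by
    rw [Matrix.l2_opNorm_def]
    have : (Matrix.toEuclideanLin (𝕜 := ℂ) (m := Fin n) (n := Fin n)).trans
        LinearMap.toContinuousLinearMap (1 : Matrix (Fin n) (Fin n) ℂ)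
        = ContinuousLinearMap.id ℂ (EuclideanSpace ℂ (Fin n)) := by
      ext v
      simp [Matrix.toEuclideanLin_apply, Matrix.one_mulVec]
    rw [this]
    exact ContinuousLinearMap.norm_id_le
  nlinarith [smith_matOpNorm_eq α ▸ norm_nonneg α, smith_matOpNorm_eq α]

open scoped Matrix.Norms.L2Operator in
lemma smith_matOpNorm_conjTranspose {m n : ℕ} (α : Matrix (Fin m) (Fin n) ℂ) :
    matOpNorm αᴴ = matOpNorm α := by
  rw [smith_matOpNorm_eq, smith_matOpNorm_eq, Matrix.l2_opNorm_conjTranspose]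

lemma smith_matOpNorm_le {m n : ℕ} (α : Matrix (Fin m) (Fin n) ℂ) {c : ℝ} (hc : 0 ≤ c)
    (h : ∀ v : EuclideanSpace ℂ (Fin n), ‖Matrix.toEuclideanLin α v‖ ≤ c * ‖v‖) :
    matOpNorm α ≤ c :=
  ContinuousLinearMap.opNorm_le_bound _ hc h

lemma smith_euclid_apply {m n : ℕ} (α : Matrix (Fin m) (Fin n) ℂ) (v : EuclideanSpace ℂ (Fin n))
    (i : Fin m) : Matrix.toEuclideanLin α v i = ∑ j, α i j * v j := by
  simp [Matrix.toEuclideanLin_apply, Matrix.mulVec, dotProduct]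

lemma smith_norm_coord {n : ℕ} (v : EuclideanSpace ℂ (Fin n)) (j : Fin n) : ‖v j‖ ≤ ‖v‖ := by
  rw [EuclideanSpace.norm_eq]
  have h : ‖v j‖ ^ 2 ≤ ∑ i, ‖v i‖ ^ 2 :=
    Finset.single_le_sum (f := fun i => ‖v i‖ ^ 2) (fun i _ => by positivity) (Finset.mem_univ j)
  calc ‖v j‖ = Real.sqrt (‖v j‖ ^ 2) := (Real.sqrt_sq (norm_nonneg _)).symm
    _ ≤ _ := Real.sqrt_le_sqrt h

lemma smith_matOpNorm_row {k : ℕ} (j : Fin k) :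
    matOpNorm (Matrix.of (fun (_ : Fin 1) j' => if j' = j then (1:ℂ) else 0)) ≤ 1 := by
  apply smith_matOpNorm_le _ zero_le_one
  intro v
  rw [one_mul]
  have h1 : ∀ i : Fin 1, Matrix.toEuclideanLin
      (Matrix.of (fun (_ : Fin 1) j' => if j' = j then (1:ℂ) else 0)) v i = v j := by
    intro i; rw [smith_euclid_apply]; simp
  rw [EuclideanSpace.norm_eq]
  simp only [h1]
  rw [Fin.sum_univ_one, Real.sqrt_sq (norm_nonneg _)]
  exact smith_norm_coord v j

lemma smith_matOpNorm_col {k : ℕ} (j : Fin k) :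
    matOpNorm (Matrix.of (fun i (_ : Fin 1) => if i = j then (1:ℂ) else 0)) ≤ 1 := by
  apply smith_matOpNorm_le _ zero_le_one
  intro v
  rw [one_mul]
  have h1 : ∀ i, Matrix.toEuclideanLin
      (Matrix.of (fun i (_ : Fin 1) => if i = j then (1:ℂ) else 0)) v i
      = if i = j then v 0 else 0 := by
    intro i; rw [smith_euclid_apply]; simp [ite_mul]
  rw [EuclideanSpace.norm_eq, EuclideanSpace.norm_eq]
  simp only [h1, Fin.sum_univ_one]
  rw [Real.sqrt_le_sqrt_iff (by positivity)]
  have h2 : ∀ x : Fin k, ‖if x = j then v 0 else 0‖ ^ 2 = if x = j then ‖v 0‖ ^ 2 else 0 := by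
    intro x; split <;> simp
  simp only [h2]
  rw [Finset.sum_ite_eq' Finset.univ j (fun _ => ‖v 0‖ ^ 2)]
  simp

/-! ### Auxiliary lemmas on sequential norms -/

section SeqNormLemmas
variable {E F : Type*} [NormedAddCommGroup E] [NormedSpace ℂ E]
  [NormedAddCommGroup F] [NormedSpace ℂ F]

lemma SeqNorm.zero' (SE : SeqNorm E) (n : ℕ) : SE.N n 0 = 0 := by
  have h := SE.smul_eq n 0 0
  simpa using h

lemma SeqNorm.nonneg (SE : SeqNorm E) (n : ℕ) (x : Fin n → E) : 0 ≤ SE.N n x := by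
  have h1 := SE.add_le n x (-x)
  have h2 : SE.N n (-x) = SE.N n x := by
    have := SE.smul_eq n (-1) x
    simpa using this
  rw [add_neg_cancel, SE.zero', h2] at h1
  linarith

lemma SeqNorm.coord_le (SE : SeqNorm E) {n : ℕ} (x : Fin n → E) (j : Fin n) :
    ‖x j‖ ≤ SE.N n x := by
  have h := SE.matrix_le 1 n (Matrix.of (fun (_ : Fin 1) j' => if j' = j then (1:ℂ) else 0)) x
  have h1 : matVec (Matrix.of (fun (_ : Fin 1) j' => if j' = j then (1:ℂ) else 0)) x
      = fun _ => x j := by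
    funext i
    simp [matVec, ite_smul]
  rw [h1, SE.norm_one] at h
  calc ‖x j‖ ≤ matOpNorm _ * SE.N n x := h
    _ ≤ 1 * SE.N n x := mul_le_mul_of_nonneg_right (smith_matOpNorm_row j) (SE.nonneg n x)
    _ = SE.N n x := one_mul _

lemma SeqNorm.single_le (SF : SeqNorm F) {n : ℕ} (y : F) (j : Fin n) :
    SF.N n (fun i => if i = j then y else 0) ≤ ‖y‖ := by
  have h := SF.matrix_le n 1 (Matrix.of (fun i (_ : Fin 1) => if i = j then (1:ℂ) else 0))
    (fun _ => y)
  have h1 : matVec (Matrix.of (fun i (_ : Fin 1) => if i = j then (1:ℂ) else 0)) (fun _ => y)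
      = fun i => if i = j then y else 0 := by
    funext i
    simp [matVec, ite_smul]
  have h2 : SF.N 1 (fun _ : Fin 1 => y) = ‖y‖ := by
    rw [SF.norm_one]
  rw [h1, h2] at h
  calc SF.N n (fun i => if i = j then y else 0) ≤ matOpNorm _ * ‖y‖ := h
    _ ≤ 1 * ‖y‖ := mul_le_mul_of_nonneg_right (smith_matOpNorm_col j) (norm_nonneg y)
    _ = ‖y‖ := one_mul _

lemma SeqNorm.sum_le (SF : SeqNorm F) {n : ℕ} {ι : Type*} (s : Finset ι) (f : ι → Fin n → F) :
    SF.N n (∑ i ∈ s, f i) ≤ ∑ i ∈ s, SF.N n (f i) := by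
  classical
  induction s using Finset.induction_on with
  | empty => simp [SF.zero']
  | insert a s hni ih =>
    rw [Finset.sum_insert hni, Finset.sum_insert hni]
    calc SF.N n (f a + ∑ i ∈ s, f i) ≤ SF.N n (f a) + SF.N n (∑ i ∈ s, f i) := SF.add_le _ _ _
      _ ≤ _ := by linarith

end SeqNormLemmas

/-! ### Amplification bounds -/

section Amp
variable {E F : Type*} [NormedAddCommGroup E] [NormedSpace ℂ E]
  [NormedAddCommGroup F] [NormedSpace ℂ F]
  (SE : SeqNorm E) (SF : SeqNorm F) (T : E →L[ℂ] F)

/-- Levelwise crude bound: the `k`-th amplification is bounded by `k * ‖T‖`. -/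
lemma smith_ampBound_crude (k : ℕ) : AmpBound SE SF T k (k * ‖T‖) := by
  intro x
  have hdecomp : (fun j => T (x j)) = ∑ j : Fin k, (fun i => if i = j then T (x j) else 0) := by
    funext i
    rw [Finset.sum_apply]
    simp
  rw [hdecomp]
  calc SF.N k (∑ j : Fin k, (fun i => if i = j then T (x j) else 0))
      ≤ ∑ j : Fin k, SF.N k (fun i => if i = j then T (x j) else 0) :=
        SF.sum_le Finset.univ _
    _ ≤ ∑ j : Fin k, ‖T (x j)‖ := Finset.sum_le_sum fun j _ => SF.single_le _ j
    _ ≤ ∑ j : Fin k, ‖T‖ * SE.N k x := Finset.sum_le_sum fun j _ =>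
        le_trans (T.le_opNorm (x j))
          (mul_le_mul_of_nonneg_left (SE.coord_le x j) (norm_nonneg T))
    _ = (k : ℝ) * ‖T‖ * SE.N k x := by
        rw [Finset.sum_const, Finset.card_univ, Fintype.card_fin, nsmul_eq_mul, mul_assoc]

/-- Padding: a bound at level `k + l` gives a bound at level `k`. -/
lemma smith_ampBound_pad {k l : ℕ} {c : ℝ} (h : AmpBound SE SF T (k + l) c) :
    AmpBound SE SF T k c := by
  intro x
  have e1 : (fun j => T (Fin.append x (0 : Fin l → E) j))
      = Fin.append (fun j => T (x j)) (0 : Fin l → F) := by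
    funext j
    refine Fin.addCases (fun i => ?_) (fun i => ?_) j <;>
      simp [Fin.append_left, Fin.append_right]
  have h2 := h (Fin.append x (0 : Fin l → E))
  rw [e1, SF.append_zero, SE.append_zero] at h2
  exact h2

lemma smith_ampBound_of_le {m k : ℕ} {c : ℝ} (hk : k ≤ m) (h : AmpBound SE SF T m c) :
    AmpBound SE SF T k c := by
  obtain ⟨l, rfl⟩ := Nat.exists_eq_add_of_le hk
  exact smith_ampBound_pad SE SF T h

end Amp

/-! ### The core reduction -/

section Core
variable {E F : Type*} [NormedAddCommGroup E] [NormedSpace ℂ E]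
  [NormedAddCommGroup F] [NormedSpace ℂ F]

/-- The evaluation map `ℓ²ₙ → F`, `v ↦ ∑ v j • T (x j)`. -/
def smithS (T : E →L[ℂ] F) {n : ℕ} (x : Fin n → E) : EuclideanSpace ℂ (Fin n) →ₗ[ℂ] F where
  toFun v := ∑ j, v j • T (x j)
  map_add' v w := by simp [add_smul, Finset.sum_add_distrib]
  map_smul' a v := by simp [smul_smul, Finset.smul_sum]

lemma smithS_apply (T : E →L[ℂ] F) {n : ℕ} (x : Fin n → E) (v : EuclideanSpace ℂ (Fin n)) :
    smithS T x v = ∑ j, v j • T (x j) := rfl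

set_option maxHeartbeats 1000000 in
/-- Smith reduction: a bound at level `m = dim F` gives a bound at every level. -/
lemma smith_core (SE : SeqNorm E) (SF : SeqNorm F) (m : ℕ) [FiniteDimensional ℂ F]
    (hdim : Module.finrank ℂ F = m) (T : E →L[ℂ] F) {c : ℝ} (hc : 0 ≤ c)
    (h : AmpBound SE SF T m c) (n : ℕ) : AmpBound SE SF T n c := by
  intro x
  classical
  set S := smithS T x with hS
  set K := (LinearMap.ker S)ᗮ with hK
  set r := Module.finrank ℂ K with hr
  have hrm : r ≤ m := by
    have h1 := Submodule.finrank_add_finrank_orthogonal (K := LinearMap.ker S)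
    have h2 := LinearMap.finrank_range_add_finrank_ker S
    have h3 : Module.finrank ℂ (LinearMap.range S) ≤ Module.finrank ℂ F :=
      Submodule.finrank_le _
    rw [finrank_euclideanSpace_fin] at h1 h2
    rw [← hK] at h1
    rw [hdim] at h3
    omega
  set b := stdOrthonormalBasis ℂ K with hb
  set β : Matrix (Fin n) (Fin r) ℂ :=
    Matrix.of (fun i k => starRingEnd ℂ ((b k : EuclideanSpace ℂ (Fin n)) i)) with hβ
  have hGram : βᴴ * β = 1 := by
    ext k l
    have horth := b.orthonormal
    rw [orthonormal_iff_ite] at horth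
    have h4 : (inner ℂ ((b l : EuclideanSpace ℂ (Fin n))) ((b k : EuclideanSpace ℂ (Fin n))) : ℂ)
        = if l = k then 1 else 0 := by
      rw [← Submodule.coe_inner]; exact horth l k
    have h5 : (inner ℂ ((b l : EuclideanSpace ℂ (Fin n))) ((b k : EuclideanSpace ℂ (Fin n))) : ℂ)
        = ∑ i, starRingEnd ℂ ((b l : EuclideanSpace ℂ (Fin n)) i)
            * ((b k : EuclideanSpace ℂ (Fin n)) i) := by
      rw [PiLp.inner_apply]; congr 1; funext i; simp [mul_comm]
    have h6 : (βᴴ * β) k l = ∑ i, starRingEnd ℂ ((b l : EuclideanSpace ℂ (Fin n)) i)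
        * ((b k : EuclideanSpace ℂ (Fin n)) i) := by
      rw [Matrix.mul_apply]
      congr 1
      funext i
      simp [Matrix.conjTranspose_apply, hβ, mul_comm]
    rw [h6, ← h5, h4, Matrix.one_apply]
    simp [eq_comm]
  have hSproj : ∀ v : EuclideanSpace ℂ (Fin n),
      S v = ∑ k, (inner ℂ ((b k : EuclideanSpace ℂ (Fin n))) v : ℂ) • S (b k) := by
    intro v
    have hmem : v - (K.orthogonalProjectionOnto v : EuclideanSpace ℂ (Fin n)) ∈ Kᗮ :=
      K.sub_starProjection_mem_orthogonal v
    have hKbot : Kᗮ = LinearMap.ker S := by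
      rw [hK, Submodule.orthogonal_orthogonal]
    rw [hKbot] at hmem
    have h0 : S v = S (K.orthogonalProjectionOnto v) := by
      have h7 := LinearMap.mem_ker.mp hmem
      rw [map_sub] at h7
      exact (sub_eq_zero.mp h7)
    rw [h0, b.orthogonalProjectionOnto_apply_eq_sum v]
    have h8 : ((∑ k, (inner ℂ ((b k : EuclideanSpace ℂ (Fin n))) v : ℂ) • b k : K) :
        EuclideanSpace ℂ (Fin n))
        = ∑ k, (inner ℂ ((b k : EuclideanSpace ℂ (Fin n))) v : ℂ)
            • (b k : EuclideanSpace ℂ (Fin n)) := by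
      push_cast
      rfl
    rw [h8, map_sum]
    simp only [_root_.map_smul]
  have hTx : ∀ j, T (x j) = S (EuclideanSpace.single j 1) := by
    intro j
    rw [hS, smithS_apply]
    have h9 : ∀ i : Fin n, (EuclideanSpace.single j (1:ℂ)) i • T (x i)
        = if i = j then T (x j) else 0 := by
      intro i
      rw [EuclideanSpace.single_apply]
      split <;> rename_i hij <;> simp [hij]
    simp [h9]
  have key : (fun j => T (x j)) = matVec β (fun k => T (matVec βᴴ x k)) := by
    funext j
    have hSb : ∀ k, T (matVec βᴴ x k) = S ((b k : EuclideanSpace ℂ (Fin n))) := by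
      intro k
      have e : matVec βᴴ x k = ∑ i, ((b k : EuclideanSpace ℂ (Fin n)) i) • x i := by
        simp only [matVec]
        congr 1
        funext i
        congr 1
        rw [Matrix.conjTranspose_apply, hβ, Matrix.of_apply, starRingEnd_apply, star_star]
      rw [e, map_sum, hS, smithS_apply]
      congr 1
      funext i
      rw [ContinuousLinearMap.map_smul]
    have h10 : ∀ k : Fin r,
        (inner ℂ ((b k : EuclideanSpace ℂ (Fin n))) (EuclideanSpace.single j (1:ℂ)) : ℂ)
        = β j k := by
      intro k
      rw [EuclideanSpace.inner_single_right, hβ]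
      simp
    rw [hTx j, hSproj (EuclideanSpace.single j 1),
      show (fun k => T (matVec βᴴ x k)) = fun k => S ((b k : EuclideanSpace ℂ (Fin n))) from
        funext hSb]
    simp only [matVec, h10]
    rfl
  have hβ1 : matOpNorm β ≤ 1 := smith_matOpNorm_isometry β hGram
  have hβH1 : matOpNorm βᴴ ≤ 1 := by
    rw [smith_matOpNorm_conjTranspose]; exact hβ1
  have hAmpr : AmpBound SE SF T r c := smith_ampBound_of_le SE SF T hrm h
  calc SF.N n (fun j => T (x j))
      = SF.N n (matVec β (fun k => T (matVec βᴴ x k))) := by rw [key]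
    _ ≤ matOpNorm β * SF.N r (fun k => T (matVec βᴴ x k)) := SF.matrix_le n r β _
    _ ≤ 1 * SF.N r (fun k => T (matVec βᴴ x k)) :=
        mul_le_mul_of_nonneg_right hβ1 (SF.nonneg _ _)
    _ = SF.N r (fun k => T (matVec βᴴ x k)) := one_mul _
    _ ≤ c * SE.N r (matVec βᴴ x) := hAmpr (matVec βᴴ x)
    _ ≤ c * (matOpNorm βᴴ * SE.N n x) :=
        mul_le_mul_of_nonneg_left (SE.matrix_le r n βᴴ x) hc
    _ ≤ c * (1 * SE.N n x) := by
        have h11 := SE.nonneg n x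
        exact mul_le_mul_of_nonneg_left (mul_le_mul_of_nonneg_right hβH1 h11) hc
    _ = c * SE.N n x := by ring

end Core

/-- Smith's lemma for operator sequence spaces: if `dim F = m < ∞`, then every
bounded linear `T : E → F` is sequentially bounded and `‖T‖_sb = ‖T^(m)‖`. -/
theorem smith_lemma {E F : Type*} [NormedAddCommGroup E] [NormedSpace ℂ E]
    [NormedAddCommGroup F] [NormedSpace ℂ F] [CompleteSpace E] [CompleteSpace F]
    (SE : SeqNorm E) (SF : SeqNorm F) (m : ℕ)
    [FiniteDimensional ℂ F] (hdim : Module.finrank ℂ F = m)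
    (T : E →L[ℂ] F) :
    (∃ c : ℝ, 0 ≤ c ∧ ∀ n : ℕ, AmpBound SE SF T n c) ∧
    sInf {c : ℝ | 0 ≤ c ∧ ∀ n : ℕ, AmpBound SE SF T n c} =
      sInf {c : ℝ | 0 ≤ c ∧ AmpBound SE SF T m c} := by
  have hall : ∀ c : ℝ, 0 ≤ c → AmpBound SE SF T m c → ∀ n, AmpBound SE SF T n c :=
    fun c hc h n => smith_core SE SF m hdim T hc h n
  have hset : {c : ℝ | 0 ≤ c ∧ ∀ n, AmpBound SE SF T n c}
      = {c : ℝ | 0 ≤ c ∧ AmpBound SE SF T m c} := by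
    ext c
    constructor
    · rintro ⟨hc, h⟩; exact ⟨hc, h m⟩
    · rintro ⟨hc, h⟩; exact ⟨hc, hall c hc h⟩
  refine ⟨⟨m * ‖T‖, by positivity, hall _ (by positivity)
    (smith_ampBound_crude SE SF T m)⟩, by rw [hset]⟩
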